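/- In the binary logit model with duration dependence, with history probabilities P_{y1,y2,y3,y4} defined by integrating over a probability measure μ on ℝ the conditional history probabilities (initial duration 1 when y1 = 1), and AME_{1→2} = ∫ (Λ(α+β2) − Λ(α+β1)) dμ(α), the following identity holds: AME_{1→2} = ((e^{β2} − e^{β1})/2)·(P_{0,0,1,0} + P_{0,1,0,0}) + ((e^{β2} − e^{β1})/e^{β1})·P_{0,0,1,1} + ( (e^{β2}(1 − e^{β2}))/e^{β1} + e^{β2} − 1 )·P_{0,1,1,0} + (1 − e^{β1}/e^{β2})·(P_{1,0,1,0} + P_{1,0,1,1}) + ( (e^{β2} − 1)/e^{β1} − 1 + 1/e^{β2} )·P_{1,1,0,0}. (Proposition 5, identification of AME_{1→2}, equation (70).) -/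
import Mathlib


open MeasureTheory

/-- The logistic function `Λ(u) = e^u / (1 + e^u)`. -/
noncomputable def logistic (u : ℝ) : ℝ := Real.exp u / (1 + Real.exp u)

lemma logistic_nonneg (u : ℝ) : 0 ≤ logistic u := by
  unfold logistic
  positivity

lemma logistic_le_one (u : ℝ) : logistic u ≤ 1 := by
  unfold logistic
  rw [div_le_one (by positivity)]
  linarith

lemma logistic_continuous : Continuous logistic :=
  Real.continuous_exp.div (continuous_const.add Real.continuous_exp)
    (fun x => by positivity)

lemma integrable_bdd (μ : Measure ℝ) [IsProbabilityMeasure μ] {f : ℝ → ℝ}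
    (hm : Measurable f) (hb : ∀ x, |f x| ≤ 1) : Integrable f μ := by
  refine ⟨hm.aestronglyMeasurable, ?_⟩
  apply MeasureTheory.HasFiniteIntegral.of_bounded (C := 1)
  exact ae_of_all _ hb

lemma abs_prod4_le_one {a b c d : ℝ} (ha0 : 0 ≤ a) (ha1 : a ≤ 1)
    (hb0 : 0 ≤ b) (hb1 : b ≤ 1) (hc0 : 0 ≤ c) (hc1 : c ≤ 1)
    (hd0 : 0 ≤ d) (hd1 : d ≤ 1) : |a * b * c * d| ≤ 1 := by
  rw [abs_of_nonneg (by positivity)]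
  nlinarith [mul_nonneg ha0 hb0, mul_nonneg (mul_nonneg ha0 hb0) hc0]

/-- Proposition 5, identification of `AME_{1→2}` (equation (70)): in the
binary logit model with duration dependence (probability of choosing 1 is
`Λ(α)` after lagged choice 0 and `Λ(α + β(d))` after lagged choice 1 with
duration `d`; `β₁ = β(1)`, `β₂ = β(2)`; initial duration 1 when `y₁ = 1`),
`AME_{1→2} = ∫ (Λ(α+β₂) − Λ(α+β₁)) dμ(α)` equals the stated weighted sum
of the four-period history probabilities, with `p*(α)` the probability of
the initial condition `y₁ = 0`. -/
theorem prop5_AME_1_to_2 (β1 β2 : ℝ) (μ : Measure ℝ) [IsProbabilityMeasure μ]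
    (pstar : ℝ → ℝ) (hmeas : Measurable pstar)
    (h0 : ∀ α, 0 ≤ pstar α) (h1 : ∀ α, pstar α ≤ 1) :
    (∫ α, (logistic (α + β2) - logistic (α + β1)) ∂μ)
      = ((Real.exp β2 - Real.exp β1) / 2)
          * ((∫ α, pstar α * (1 - logistic α) * logistic α * (1 - logistic (α + β1)) ∂μ)
              + ∫ α, pstar α * logistic α * (1 - logistic (α + β1)) * (1 - logistic α) ∂μ)
        + ((Real.exp β2 - Real.exp β1) / Real.exp β1)
          * (∫ α, pstar α * (1 - logistic α) * logistic α * logistic (α + β1) ∂μ)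
        + ((Real.exp β2 * (1 - Real.exp β2)) / Real.exp β1 + Real.exp β2 - 1)
          * (∫ α, pstar α * logistic α * logistic (α + β1) * (1 - logistic (α + β2)) ∂μ)
        + (1 - Real.exp β1 / Real.exp β2)
          * ((∫ α, (1 - pstar α) * (1 - logistic (α + β1)) * logistic α * (1 - logistic (α + β1)) ∂μ)
              + ∫ α, (1 - pstar α) * (1 - logistic (α + β1)) * logistic α * logistic (α + β1) ∂μ)
        + ((Real.exp β2 - 1) / Real.exp β1 - 1 + 1 / Real.exp β2)
          * (∫ α, (1 - pstar α) * logistic (α + β1) * (1 - logistic (α + β2)) * (1 - logistic α) ∂μ) := by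
  set c1 : ℝ := (Real.exp β2 - Real.exp β1) / 2
  set c2 : ℝ := (Real.exp β2 - Real.exp β1) / Real.exp β1
  set c3 : ℝ := (Real.exp β2 * (1 - Real.exp β2)) / Real.exp β1 + Real.exp β2 - 1
  set c4 : ℝ := 1 - Real.exp β1 / Real.exp β2
  set c5 : ℝ := (Real.exp β2 - 1) / Real.exp β1 - 1 + 1 / Real.exp β2
  set f1 : ℝ → ℝ := fun α => pstar α * (1 - logistic α) * logistic α * (1 - logistic (α + β1))
  set f2 : ℝ → ℝ := fun α => pstar α * logistic α * (1 - logistic (α + β1)) * (1 - logistic α)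
  set f3 : ℝ → ℝ := fun α => pstar α * (1 - logistic α) * logistic α * logistic (α + β1)
  set f4 : ℝ → ℝ := fun α => pstar α * logistic α * logistic (α + β1) * (1 - logistic (α + β2))
  set f5 : ℝ → ℝ := fun α => (1 - pstar α) * (1 - logistic (α + β1)) * logistic α * (1 - logistic (α + β1))
  set f6 : ℝ → ℝ := fun α => (1 - pstar α) * (1 - logistic (α + β1)) * logistic α * logistic (α + β1)
  set f7 : ℝ → ℝ := fun α => (1 - pstar α) * logistic (α + β1) * (1 - logistic (α + β2)) * (1 - logistic α)
  have hLm : Measurable logistic := logistic_continuous.measurable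
  have hLb : ∀ u, 0 ≤ logistic u ∧ logistic u ≤ 1 :=
    fun u => ⟨logistic_nonneg u, logistic_le_one u⟩
  have hp' : ∀ α, 0 ≤ 1 - pstar α ∧ 1 - pstar α ≤ 1 := fun α => ⟨by linarith [h1 α], by linarith [h0 α]⟩
  have hL1 : ∀ u : ℝ, 0 ≤ 1 - logistic u ∧ 1 - logistic u ≤ 1 :=
    fun u => ⟨by linarith [(hLb u).2], by linarith [(hLb u).1]⟩
  have hmL : ∀ c : ℝ, Measurable fun α : ℝ => logistic (α + c) :=
    fun c => hLm.comp (measurable_id.add_const c)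
  have hif1 : Integrable f1 μ := integrable_bdd μ
    (((hmeas.mul ((measurable_const.sub hLm))).mul hLm).mul (measurable_const.sub (hmL β1)))
    (fun x => abs_prod4_le_one (h0 x) (h1 x) (hL1 x).1 (hL1 x).2 (hLb x).1 (hLb x).2
      (hL1 (x+β1)).1 (hL1 (x+β1)).2)
  have hif2 : Integrable f2 μ := integrable_bdd μ
    (((hmeas.mul hLm).mul (measurable_const.sub (hmL β1))).mul (measurable_const.sub hLm))
    (fun x => abs_prod4_le_one (h0 x) (h1 x) (hLb x).1 (hLb x).2 (hL1 (x+β1)).1 (hL1 (x+β1)).2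
      (hL1 x).1 (hL1 x).2)
  have hif3 : Integrable f3 μ := integrable_bdd μ
    (((hmeas.mul ((measurable_const.sub hLm))).mul hLm).mul (hmL β1))
    (fun x => abs_prod4_le_one (h0 x) (h1 x) (hL1 x).1 (hL1 x).2 (hLb x).1 (hLb x).2
      (hLb (x+β1)).1 (hLb (x+β1)).2)
  have hif4 : Integrable f4 μ := integrable_bdd μ
    (((hmeas.mul hLm).mul (hmL β1)).mul (measurable_const.sub (hmL β2)))
    (fun x => abs_prod4_le_one (h0 x) (h1 x) (hLb x).1 (hLb x).2 (hLb (x+β1)).1 (hLb (x+β1)).2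
      (hL1 (x+β2)).1 (hL1 (x+β2)).2)
  have hif5 : Integrable f5 μ := integrable_bdd μ
    ((((measurable_const.sub hmeas).mul (measurable_const.sub (hmL β1))).mul hLm).mul
      (measurable_const.sub (hmL β1)))
    (fun x => abs_prod4_le_one (hp' x).1 (hp' x).2 (hL1 (x+β1)).1 (hL1 (x+β1)).2 (hLb x).1 (hLb x).2
      (hL1 (x+β1)).1 (hL1 (x+β1)).2)
  have hif6 : Integrable f6 μ := integrable_bdd μ
    ((((measurable_const.sub hmeas).mul (measurable_const.sub (hmL β1))).mul hLm).mul (hmL β1))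
    (fun x => abs_prod4_le_one (hp' x).1 (hp' x).2 (hL1 (x+β1)).1 (hL1 (x+β1)).2 (hLb x).1 (hLb x).2
      (hLb (x+β1)).1 (hLb (x+β1)).2)
  have hif7 : Integrable f7 μ := integrable_bdd μ
    ((((measurable_const.sub hmeas).mul (hmL β1)).mul (measurable_const.sub (hmL β2))).mul
      (measurable_const.sub hLm))
    (fun x => abs_prod4_le_one (hp' x).1 (hp' x).2 (hLb (x+β1)).1 (hLb (x+β1)).2
      (hL1 (x+β2)).1 (hL1 (x+β2)).2 (hL1 x).1 (hL1 x).2)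
  have key : ∀ α : ℝ, logistic (α + β2) - logistic (α + β1)
      = c1 * f1 α + c1 * f2 α + c2 * f3 α + c3 * f4 α + c4 * f5 α + c4 * f6 α + c5 * f7 α := by
    intro α
    have h2 : (0:ℝ) < 2 := by norm_num
    have he1 : 0 < Real.exp β1 := Real.exp_pos _
    have he2 : 0 < Real.exp β2 := Real.exp_pos _
    have hd0 : (0:ℝ) < 1 + Real.exp α := by positivity
    have hd1 : (0:ℝ) < 1 + Real.exp (α + β1) := by positivity
    have hd2 : (0:ℝ) < 1 + Real.exp (α + β2) := by positivity
    simp only [c1, c2, c3, c4, c5, f1, f2, f3, f4, f5, f6, f7, logistic]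
    rw [Real.exp_add α β1, Real.exp_add α β2]
    field_simp
    ring
  calc (∫ α, (logistic (α + β2) - logistic (α + β1)) ∂μ)
      = ∫ α, (c1 * f1 α + c1 * f2 α + c2 * f3 α + c3 * f4 α + c4 * f5 α + c4 * f6 α + c5 * f7 α) ∂μ := by
        exact integral_congr_ae (ae_of_all _ key)
    _ = c1 * ∫ α, f1 α ∂μ + c1 * ∫ α, f2 α ∂μ + c2 * ∫ α, f3 α ∂μ + c3 * ∫ α, f4 α ∂μ + c4 * ∫ α, f5 α ∂μ + c4 * ∫ α, f6 α ∂μ + c5 * ∫ α, f7 α ∂μ := by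
        have g2 : Integrable (fun α => c1 * f1 α + c1 * f2 α) μ := (hif1.const_mul c1).add (hif2.const_mul c1)
        have g3 : Integrable (fun α => c1 * f1 α + c1 * f2 α + c2 * f3 α) μ := ((hif1.const_mul c1).add (hif2.const_mul c1)).add (hif3.const_mul c2)
        have g4 : Integrable (fun α => c1 * f1 α + c1 * f2 α + c2 * f3 α + c3 * f4 α) μ := (((hif1.const_mul c1).add (hif2.const_mul c1)).add (hif3.const_mul c2)).add (hif4.const_mul c3)
        have g5 : Integrable (fun α => c1 * f1 α + c1 * f2 α + c2 * f3 α + c3 * f4 α + c4 * f5 α) μ := ((((hif1.const_mul c1).add (hif2.const_mul c1)).add (hif3.const_mul c2)).add (hif4.const_mul c3)).add (hif5.const_mul c4)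
        have g6 : Integrable (fun α => c1 * f1 α + c1 * f2 α + c2 * f3 α + c3 * f4 α + c4 * f5 α + c4 * f6 α) μ := (((((hif1.const_mul c1).add (hif2.const_mul c1)).add (hif3.const_mul c2)).add (hif4.const_mul c3)).add (hif5.const_mul c4)).add (hif6.const_mul c4)
        have g7 : Integrable (fun α => c1 * f1 α + c1 * f2 α + c2 * f3 α + c3 * f4 α + c4 * f5 α + c4 * f6 α + c5 * f7 α) μ := ((((((hif1.const_mul c1).add (hif2.const_mul c1)).add (hif3.const_mul c2)).add (hif4.const_mul c3)).add (hif5.const_mul c4)).add (hif6.const_mul c4)).add (hif7.const_mul c5)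
        have I2 : ∫ α, (c1 * f1 α + c1 * f2 α) ∂μ = c1 * ∫ α, f1 α ∂μ + c1 * ∫ α, f2 α ∂μ := by
          rw [integral_add (hif1.const_mul c1) (hif2.const_mul c1), integral_const_mul, integral_const_mul]
        have I3 : ∫ α, (c1 * f1 α + c1 * f2 α + c2 * f3 α) ∂μ = c1 * ∫ α, f1 α ∂μ + c1 * ∫ α, f2 α ∂μ + c2 * ∫ α, f3 α ∂μ := by
          rw [integral_add g2 (hif3.const_mul c2), I2, integral_const_mul]
        have I4 : ∫ α, (c1 * f1 α + c1 * f2 α + c2 * f3 α + c3 * f4 α) ∂μ = c1 * ∫ α, f1 α ∂μ + c1 * ∫ α, f2 α ∂μ + c2 * ∫ α, f3 α ∂μ + c3 * ∫ α, f4 α ∂μ := by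
          rw [integral_add g3 (hif4.const_mul c3), I3, integral_const_mul]
        have I5 : ∫ α, (c1 * f1 α + c1 * f2 α + c2 * f3 α + c3 * f4 α + c4 * f5 α) ∂μ = c1 * ∫ α, f1 α ∂μ + c1 * ∫ α, f2 α ∂μ + c2 * ∫ α, f3 α ∂μ + c3 * ∫ α, f4 α ∂μ + c4 * ∫ α, f5 α ∂μ := by
          rw [integral_add g4 (hif5.const_mul c4), I4, integral_const_mul]
        have I6 : ∫ α, (c1 * f1 α + c1 * f2 α + c2 * f3 α + c3 * f4 α + c4 * f5 α + c4 * f6 α) ∂μ = c1 * ∫ α, f1 α ∂μ + c1 * ∫ α, f2 α ∂μ + c2 * ∫ α, f3 α ∂μ + c3 * ∫ α, f4 α ∂μ + c4 * ∫ α, f5 α ∂μ + c4 * ∫ α, f6 α ∂μ := by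
          rw [integral_add g5 (hif6.const_mul c4), I5, integral_const_mul]
        have I7 : ∫ α, (c1 * f1 α + c1 * f2 α + c2 * f3 α + c3 * f4 α + c4 * f5 α + c4 * f6 α + c5 * f7 α) ∂μ = c1 * ∫ α, f1 α ∂μ + c1 * ∫ α, f2 α ∂μ + c2 * ∫ α, f3 α ∂μ + c3 * ∫ α, f4 α ∂μ + c4 * ∫ α, f5 α ∂μ + c4 * ∫ α, f6 α ∂μ + c5 * ∫ α, f7 α ∂μ := by
          rw [integral_add g6 (hif7.const_mul c5), I6, integral_const_mul]
        exact I7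
    _ = _ := by ring
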